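/- Let G be a finite connected simple graph with at least one edge. Then the matching number ν(G) equals the induced matching number ν₀(G) if and only if G is one of the following: (i) a star; (ii) a star triangle; or (iii) a graph consisting of a connected bipartite graph with bipartition (X, Y) such that every vertex x ∈ X is incident to at least one leaf edge, together with possibly some pendant triangles attached to vertices of Y. -/

import Mathlib

open scoped Classical

namespace SimpleGraph

variable {V : Type*}

/-- A set of edges of `G` forming a matching: pairwise disjoint edges of `G`. -/
def IsMatchingSet (G : SimpleGraph V) (M : Finset (Sym2 V)) : Prop :=
  (∀ e ∈ M, e ∈ G.edgeSet) ∧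
  ∀ e ∈ M, ∀ f ∈ M, e ≠ f → ∀ v : V, v ∈ e → v ∉ f

/-- An induced matching: a matching such that no edge of `G` joins two distinct
edges of the matching. -/
def IsInducedMatchingSet (G : SimpleGraph V) (M : Finset (Sym2 V)) : Prop :=
  G.IsMatchingSet M ∧
  ∀ e ∈ M, ∀ f ∈ M, e ≠ f → ∀ u v : V, u ∈ e → v ∈ f → ¬ G.Adj u v

/-- The matching number of `G`: the maximum size of a matching. -/
noncomputable def matchingNumber [Fintype V] (G : SimpleGraph V) : ℕ :=
  sSup {n | ∃ M : Finset (Sym2 V), G.IsMatchingSet M ∧ M.card = n}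

/-- The induced matching number of `G`: the maximum size of an induced matching. -/
noncomputable def inducedMatchingNumber [Fintype V] (G : SimpleGraph V) : ℕ :=
  sSup {n | ∃ M : Finset (Sym2 V), G.IsInducedMatchingSet M ∧ M.card = n}

/-- `G` is a star `K_{1,n}` (with `n ≥ 1`): there is a center `c` adjacent to
all other vertices, and these are the only edges. -/
def IsStarGraph (G : SimpleGraph V) : Prop :=
  ∃ c : V, (∃ v : V, v ≠ c) ∧
    ∀ u v : V, G.Adj u v ↔ ((u = c ∧ v ≠ c) ∨ (v = c ∧ u ≠ c))

/-- `G` is a star triangle: finitely many (at least one) triangles sharing exactly one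
common vertex `c` and otherwise pairwise vertex-disjoint.  The vertices other than `c`
are paired up by a fixed-point-free involution `p`, each pair forming a triangle with
`c`, and these are the only edges. -/
def IsStarTriangleGraph (G : SimpleGraph V) : Prop :=
  ∃ (c : V) (p : V → V),
    (∃ v : V, v ≠ c) ∧
    (∀ v : V, v ≠ c → p v ≠ v ∧ p v ≠ c ∧ p (p v) = v) ∧
    (∀ u v : V, G.Adj u v ↔
      ((u = c ∧ v ≠ c) ∨ (v = c ∧ u ≠ c) ∨ (u ≠ c ∧ v ≠ c ∧ v = p u)))

/-- `G` consists of a connected bipartite graph with bipartition `(X, Y)` such that every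
vertex of `X` is incident to at least one leaf edge, together with possibly some pendant
triangles attached to vertices of `Y`.  The pendant-triangle vertices form the set `Z`,
paired by the involution `pair`, each pair being attached to the vertex `att z ∈ Y`;
a pendant-triangle vertex `z` is adjacent exactly to `pair z` and `att z`. -/
def IsCWBipartiteWithPendantTriangles (G : SimpleGraph V) : Prop :=
  ∃ (X Y Z : Set V) (pair att : V → V),
    Disjoint X Y ∧ Disjoint X Z ∧ Disjoint Y Z ∧
    X ∪ Y ∪ Z = Set.univ ∧
    X.Nonempty ∧
    (∀ u ∈ X, ∀ v ∈ X, ¬ G.Adj u v) ∧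
    (∀ u ∈ Y, ∀ v ∈ Y, ¬ G.Adj u v) ∧
    (∀ z ∈ Z, pair z ∈ Z ∧ pair z ≠ z ∧ pair (pair z) = z ∧ att z ∈ Y ∧
      att (pair z) = att z ∧ ∀ u : V, G.Adj z u ↔ (u = pair z ∨ u = att z)) ∧
    (∀ x ∈ X, ∃ y ∈ Y, G.neighborSet y = {x}) ∧
    (G.induce (X ∪ Y)).Connected



section CWAux
variable [Fintype V] {G : SimpleGraph V}

lemma star_matching_card_le {c : V}
    (hadj : ∀ u v : V, G.Adj u v ↔ ((u = c ∧ v ≠ c) ∨ (v = c ∧ u ≠ c)))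
    {N : Finset (Sym2 V)} (hN : G.IsMatchingSet N) : N.card ≤ 1 := by
  rw [Finset.card_le_one]
  intro e he f hf
  by_contra hef
  have hc : ∀ g ∈ N, c ∈ g := by
    intro g hg
    have hg' := hN.1 g hg
    induction g using Sym2.ind with
    | _ x y =>
      rw [SimpleGraph.mem_edgeSet, hadj] at hg'
      rw [Sym2.mem_iff]
      rcases hg' with ⟨h1, _⟩ | ⟨h1, _⟩
      · exact Or.inl h1.symm
      · exact Or.inr h1.symm
  exact hN.2 e he f hf hef c (hc e he) (hc f hf)


section StarTriangle
variable {c : V} {p : V → V}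
  (hp : ∀ v : V, v ≠ c → p v ≠ v ∧ p v ≠ c ∧ p (p v) = v)
  (hadj : ∀ u v : V, G.Adj u v ↔
      ((u = c ∧ v ≠ c) ∨ (v = c ∧ u ≠ c) ∨ (u ≠ c ∧ v ≠ c ∧ v = p u)))

/-- The canonical induced matching for a star triangle. -/
noncomputable def stM (G : SimpleGraph V) (c : V) (p : V → V) : Finset (Sym2 V) :=
  (Finset.univ.filter (· ≠ c)).image (fun v => s(v, p v))

include hp in
lemma stM_mem {e : Sym2 V} (he : e ∈ stM G c p) : ∃ v, v ≠ c ∧ e = s(v, p v) := by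
  simp only [stM, Finset.mem_image, Finset.mem_filter, Finset.mem_univ, true_and] at he
  obtain ⟨v, hv, rfl⟩ := he
  exact ⟨v, hv, rfl⟩

include hp in
lemma stM_eq_of_shared {v u : V} (hv : v ≠ c) (hu : u ≠ c) {x : V}
    (hx1 : x ∈ s(v, p v)) (hx2 : x ∈ s(u, p u)) : s(v, p v) = s(u, p u) := by
  rw [Sym2.mem_iff] at hx1 hx2
  have h1 := hp v hv
  have h2 := hp u hu
  rcases hx1 with rfl | rfl
  · rcases hx2 with rfl | h
    · rfl
    · -- x = p u, x = v so v = p u, hence p v = u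
      have : p x = u := by rw [h, h2.2.2]
      rw [← this, Sym2.eq_swap, this, ← h]
  · rcases hx2 with h | h
    · -- p v = u
      rw [← h, h1.2.2]
      exact Sym2.eq_swap
    · -- p v = p u ⇒ v = u
      have : v = u := by rw [← h1.2.2, h, h2.2.2]
      rw [this]

include hp hadj in
lemma stM_induced : G.IsInducedMatchingSet (stM G c p) := by
  have hmem := fun {e} he => stM_mem (G := G) hp (e := e) he
  refine ⟨⟨?_, ?_⟩, ?_⟩
  · intro e he
    obtain ⟨v, hv, rfl⟩ := hmem he
    rw [SimpleGraph.mem_edgeSet, hadj]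
    exact Or.inr (Or.inr ⟨hv, (hp v hv).2.1, rfl⟩)
  · intro e he f hf hef x hxe hxf
    obtain ⟨v, hv, rfl⟩ := hmem he
    obtain ⟨u, hu, rfl⟩ := hmem hf
    exact hef (stM_eq_of_shared hp hv hu hxe hxf)
  · intro e he f hf hef a b hae hbf hab
    obtain ⟨v, hv, rfl⟩ := hmem he
    obtain ⟨u, hu, rfl⟩ := hmem hf
    have hva : a ≠ c := by
      rw [Sym2.mem_iff] at hae
      rcases hae with rfl | rfl
      · exact hv
      · exact (hp v hv).2.1
    have hvb : b ≠ c := by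
      rw [Sym2.mem_iff] at hbf
      rcases hbf with rfl | rfl
      · exact hu
      · exact (hp u hu).2.1
    rw [hadj] at hab
    rcases hab with ⟨h1, _⟩ | ⟨h1, _⟩ | ⟨_, _, h1⟩
    · exact hva h1
    · exact hvb h1
    · -- b = p a, so b ∈ s(v, p v)
      apply hef
      have hbe : b ∈ s(v, p v) := by
        rw [Sym2.mem_iff] at hae ⊢
        rcases hae with rfl | rfl
        · exact Or.inr (h1 ▸ rfl)
        · left; rw [h1, (hp v hv).2.2]
      exact stM_eq_of_shared hp hv hu hbe hbf

include hp hadj in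
lemma stM_bound {N : Finset (Sym2 V)} (hN : G.IsMatchingSet N) :
    N.card ≤ (stM G c p).card := by
  -- each edge of N contains a vertex ≠ c
  have hestruct : ∀ e ∈ N, ∃ w, w ≠ c ∧ w ∈ e ∧ (e = s(c, w) ∨ e = s(w, p w)) := by
    intro e he
    have he' := hN.1 e he
    induction e using Sym2.ind with
    | _ x y =>
      rw [SimpleGraph.mem_edgeSet, hadj] at he'
      rcases he' with ⟨rfl, h2⟩ | ⟨rfl, h2⟩ | ⟨h1, h2, rfl⟩
      · exact ⟨y, h2, by rw [Sym2.mem_iff]; right; rfl, Or.inl rfl⟩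
      · exact ⟨x, h2, by rw [Sym2.mem_iff]; left; rfl, Or.inl (Sym2.eq_swap)⟩
      · exact ⟨x, h1, by rw [Sym2.mem_iff]; left; rfl, Or.inr rfl⟩
  classical
  set w : Sym2 V → V := fun e => if h : ∃ w, w ≠ c ∧ w ∈ e ∧ (e = s(c, w) ∨ e = s(w, p w))
    then h.choose else c with hw
  have hwspec : ∀ e ∈ N, (w e) ≠ c ∧ (w e) ∈ e ∧ (e = s(c, w e) ∨ e = s(w e, p (w e))) := by
    intro e he
    have h := hestruct e he
    rw [hw]
    simp only [dif_pos h]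
    exact h.choose_spec
  apply Finset.card_le_card_of_injOn (fun e => s(w e, p (w e)))
  · intro e he
    simp only [Finset.mem_coe, stM, Finset.mem_image, Finset.mem_filter, Finset.mem_univ, true_and]
    exact ⟨w e, (hwspec e he).1, rfl⟩
  · intro e he f hf heq
    by_contra hef
    simp only at heq
    obtain ⟨hwe, hme, hse⟩ := hwspec e he
    obtain ⟨hwf, hmf, hsf⟩ := hwspec f hf
    -- w f ∈ s(w e, p (w e))
    have hwfe : w f ∈ s(w e, p (w e)) := by rw [heq, Sym2.mem_iff]; left; rfl
    rw [Sym2.mem_iff] at hwfe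
    -- find common vertex of e and f
    have key : ∀ v : V, v ∈ e → v ∈ f → False := fun v h1 h2 => hN.2 e he f hf hef v h1 h2
    rcases hwfe with h | h
    · exact key (w f) (h ▸ hme) hmf
    · -- w f = p (w e); then w e = p (w f)
      have hwe' : w e = p (w f) := by rw [h, (hp (w e) hwe).2.2]
      -- case on structures
      rcases hse with hse | hse <;> rcases hsf with hsf | hsf
      · exact key c (by rw [hse, Sym2.mem_iff]; left; rfl)
          (by rw [hsf, Sym2.mem_iff]; left; rfl)
      · exact key (w e) hme (by rw [hsf, Sym2.mem_iff]; right; exact hwe')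
      · exact key (w f) (by rw [hse, Sym2.mem_iff]; right; exact h) hmf
      · exact key (w f) (by rw [hse, Sym2.mem_iff]; right; exact h) hmf

end StarTriangle

section CW
variable {X Y Z : Set V} {pair att : V → V}
  (hXY : Disjoint X Y) (hXZ : Disjoint X Z) (hYZ : Disjoint Y Z)
  (hcover : X ∪ Y ∪ Z = Set.univ)
  (hXind : ∀ u ∈ X, ∀ v ∈ X, ¬ G.Adj u v)
  (hYind : ∀ u ∈ Y, ∀ v ∈ Y, ¬ G.Adj u v)
  (hz : ∀ z ∈ Z, pair z ∈ Z ∧ pair z ≠ z ∧ pair (pair z) = z ∧ att z ∈ Y ∧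
      att (pair z) = att z ∧ ∀ u : V, G.Adj z u ↔ (u = pair z ∨ u = att z))
  (hleaf : ∀ x ∈ X, ∃ y ∈ Y, G.neighborSet y = {x})

/-- Chosen leaf neighbour of `x ∈ X`. -/
noncomputable def cwY (G : SimpleGraph V) (Y : Set V) : V → V := fun x =>
  if h : ∃ y ∈ Y, G.neighborSet y = {x} then h.choose else x

include hleaf in
lemma cwY_spec {x : V} (hx : x ∈ X) :
    cwY G Y x ∈ Y ∧ G.neighborSet (cwY G Y x) = {x} := by
  have h := hleaf x hx
  rw [cwY, dif_pos h]
  exact ⟨h.choose_spec.1, h.choose_spec.2⟩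

include hleaf in
lemma cwY_adj {x : V} (hx : x ∈ X) : G.Adj x (cwY G Y x) := by
  have h := (cwY_spec hleaf hx).2
  have : x ∈ G.neighborSet (cwY G Y x) := by rw [h]; rfl
  exact (G.mem_neighborSet _ _ |>.mp this).symm

include hleaf in
lemma cwY_only {x u : V} (hx : x ∈ X) (hadj : G.Adj (cwY G Y x) u) : u = x := by
  have h := (cwY_spec hleaf hx).2
  have : u ∈ G.neighborSet (cwY G Y x) := hadj
  rwa [h, Set.mem_singleton_iff] at this

include hz in
lemma z_adj_pair {z : V} (hzZ : z ∈ Z) : G.Adj z (pair z) :=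
  ((hz z hzZ).2.2.2.2.2 (pair z)).mpr (Or.inl rfl)

include hz in
lemma z_adj_att {z : V} (hzZ : z ∈ Z) : G.Adj z (att z) :=
  ((hz z hzZ).2.2.2.2.2 (att z)).mpr (Or.inr rfl)

include hz in
lemma z_nbr {z u : V} (hzZ : z ∈ Z) (hadj : G.Adj z u) : u = pair z ∨ u = att z :=
  ((hz z hzZ).2.2.2.2.2 u).mp hadj

/-- The canonical induced matching of a CW graph. -/
noncomputable def cwM (G : SimpleGraph V) (X Y Z : Set V) (pair : V → V) : Finset (Sym2 V) :=
  ((Finset.univ.filter (· ∈ X)).image (fun x => s(x, cwY G Y x))) ∪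
  ((Finset.univ.filter (· ∈ Z)).image (fun z => s(z, pair z)))

lemma cwM_mem {e : Sym2 V} :
    e ∈ cwM G X Y Z pair ↔ (∃ x ∈ X, e = s(x, cwY G Y x)) ∨ ∃ z ∈ Z, e = s(z, pair z) := by
  simp only [cwM, Finset.mem_union, Finset.mem_image, Finset.mem_filter, Finset.mem_univ,
    true_and]
  constructor
  · rintro (⟨x, hx, rfl⟩ | ⟨z, hzz, rfl⟩)
    · exact Or.inl ⟨x, hx, rfl⟩
    · exact Or.inr ⟨z, hzz, rfl⟩
  · rintro (⟨x, hx, rfl⟩ | ⟨z, hzz, rfl⟩)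
    · exact Or.inl ⟨x, hx, rfl⟩
    · exact Or.inr ⟨z, hzz, rfl⟩

include hXY hXZ hYZ hXind hYind hz hleaf in
/-- Key separation lemma: distinct edges of `cwM` neither share vertices nor are joined. -/
lemma cwM_key {e f : Sym2 V} (he : e ∈ cwM G X Y Z pair) (hf : f ∈ cwM G X Y Z pair)
    (hef : e ≠ f) {u v : V} (hue : u ∈ e) (hvf : v ∈ f) (huv : u = v ∨ G.Adj u v) : False := by
  rw [cwM_mem] at he hf
  have pairinv : ∀ z ∈ Z, pair (pair z) = z := fun z h => (hz z h).2.2.1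
  have pairZ : ∀ z ∈ Z, pair z ∈ Z := fun z h => (hz z h).1
  have attY : ∀ z ∈ Z, att z ∈ Y := fun z h => (hz z h).2.2.2.1
  rcases he with ⟨x, hx, rfl⟩ | ⟨z, hzz, rfl⟩ <;>
    rcases hf with ⟨x', hx', rfl⟩ | ⟨z', hzz', rfl⟩
  · -- leaf vs leaf
    have hxx : x ≠ x' := fun h => hef (by rw [h])
    rw [Sym2.mem_iff] at hue hvf
    have hY := (cwY_spec hleaf hx).1
    have hY' := (cwY_spec hleaf hx').1
    rcases huv with rfl | huv
    · rcases hue with rfl | rfl <;> rcases hvf with h | h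
      · exact hxx h
      · exact hXY.ne_of_mem hx (h ▸ hY') h
      · exact hXY.ne_of_mem hx' (h ▸ hY) h.symm
      · -- cwY x = cwY x' : neighbor sets both singletons
        have h1 := (cwY_spec hleaf hx).2
        have h2 := (cwY_spec hleaf hx').2
        rw [h] at h1
        rw [h1] at h2
        exact hxx (Set.singleton_eq_singleton_iff.mp h2)
    · rcases hue with rfl | rfl <;> rcases hvf with rfl | rfl
      · exact hXind _ hx _ hx' huv
      · exact hxx (cwY_only hleaf hx' huv.symm)
      · exact hxx (cwY_only hleaf hx huv).symm
      · exact hYind _ hY _ hY' huv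
  · -- leaf vs pair
    rw [Sym2.mem_iff] at hue hvf
    have hY := (cwY_spec hleaf hx).1
    have hvZ : v ∈ Z := by
      rcases hvf with rfl | rfl
      · exact hzz'
      · exact pairZ _ hzz'
    rcases huv with rfl | huv
    · rcases hue with rfl | rfl
      · exact hXZ.ne_of_mem hx hvZ rfl
      · exact hYZ.ne_of_mem hY hvZ rfl
    · -- Adj u v with v ∈ Z
      rcases z_nbr hz hvZ huv.symm with h | h
      · -- u = pair v ∈ Z
        rcases hue with rfl | rfl
        · exact hXZ.ne_of_mem hx (h ▸ pairZ _ hvZ) h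
        · exact hYZ.ne_of_mem hY (h ▸ pairZ _ hvZ) h
      · -- u = att v ∈ Y
        rcases hue with rfl | rfl
        · exact hXY.ne_of_mem hx (h ▸ attY _ hvZ) h
        · -- cwY x = att v ; but v ∈ N(att v), so v = x ∈ X ∩ Z
          have h1 := (cwY_spec hleaf hx).2
          have hv : v ∈ G.neighborSet (cwY G Y x) := by
            rw [h]; exact (z_adj_att hz hvZ).symm
          rw [h1, Set.mem_singleton_iff] at hv
          exact hXZ.ne_of_mem (hv ▸ hx) hvZ rfl
  · -- pair vs leaf (symmetric)
    rw [Sym2.mem_iff] at hue hvf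
    have hY := (cwY_spec hleaf hx').1
    have huZ : u ∈ Z := by
      rcases hue with rfl | rfl
      · exact hzz
      · exact pairZ _ hzz
    rcases huv with rfl | huv
    · rcases hvf with rfl | rfl
      · exact hXZ.ne_of_mem hx' huZ rfl
      · exact hYZ.ne_of_mem hY huZ rfl
    · rcases z_nbr hz huZ huv with h | h
      · rcases hvf with rfl | rfl
        · exact hXZ.ne_of_mem hx' (h ▸ pairZ _ huZ) h
        · exact hYZ.ne_of_mem hY (h ▸ pairZ _ huZ) h
      · rcases hvf with rfl | rfl
        · exact hXY.ne_of_mem hx' (h ▸ attY _ huZ) h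
        · have h1 := (cwY_spec hleaf hx').2
          have hv : u ∈ G.neighborSet (cwY G Y x') := by
            rw [h]; exact (z_adj_att hz huZ).symm
          rw [h1, Set.mem_singleton_iff] at hv
          exact hXZ.ne_of_mem (hv ▸ hx') huZ rfl
  · -- pair vs pair
    have hne : z' ≠ z ∧ z' ≠ pair z ∧ pair z' ≠ z ∧ pair z' ≠ pair z := by
      refine ⟨?_, ?_, ?_, ?_⟩
      · rintro rfl; exact hef rfl
      · rintro rfl
        exact hef (by rw [pairinv _ hzz]; exact Sym2.eq_swap.symm)
      · intro h
        apply hef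
        rw [← h, pairinv _ hzz']
        exact Sym2.eq_swap
      · intro h
        have : z' = z := by rw [← pairinv _ hzz', h, pairinv _ hzz]
        exact hef (by rw [this])
    rw [Sym2.mem_iff] at hue hvf
    have huZ : u ∈ Z := by rcases hue with rfl | rfl; exacts [hzz, pairZ _ hzz]
    rcases huv with rfl | huv
    · rcases hue with rfl | rfl <;> rcases hvf with h | h
      · exact hne.1 h.symm
      · exact hne.2.2.1 h.symm
      · exact hne.2.1 h.symm
      · exact hne.2.2.2 h.symm
    · rcases z_nbr hz huZ huv with h | h
      · -- v = pair u
        rcases hue with rfl | rfl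
        · -- v = pair z
          rcases hvf with h' | h'
          · exact hne.2.1 (h'.symm.trans h)
          · exact hne.2.2.2 (h'.symm.trans h)
        · -- v = pair (pair z) = z
          rw [pairinv _ hzz] at h
          rcases hvf with h' | h'
          · exact hne.1 (h'.symm.trans h)
          · exact hne.2.2.1 (h'.symm.trans h)
      · -- v = att u ∈ Y, but v ∈ Z
        have hvZ : v ∈ Z := by rcases hvf with rfl | rfl; exacts [hzz', pairZ _ hzz']
        exact hYZ.ne_of_mem (h ▸ attY _ huZ) hvZ rfl

include hXY hXZ hYZ hXind hYind hz hleaf in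
lemma cwM_induced : G.IsInducedMatchingSet (cwM G X Y Z pair) := by
  refine ⟨⟨?_, ?_⟩, ?_⟩
  · intro e he
    rw [cwM_mem] at he
    rcases he with ⟨x, hx, rfl⟩ | ⟨z, hzz, rfl⟩
    · exact G.mem_edgeSet.mpr (cwY_adj hleaf hx)
    · exact G.mem_edgeSet.mpr (z_adj_pair hz hzz)
  · intro e he f hf hef v hv hv'
    exact cwM_key hXY hXZ hYZ hXind hYind hz hleaf he hf hef hv hv' (Or.inl rfl)
  · intro e he f hf hef u v hu hv hadj
    exact cwM_key hXY hXZ hYZ hXind hYind hz hleaf he hf hef hu hv (Or.inr hadj)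

include hXY hXZ hYZ hcover hXind hYind hz hleaf in
lemma cwM_bound {N : Finset (Sym2 V)} (hN : G.IsMatchingSet N) :
    N.card ≤ (cwM G X Y Z pair).card := by
  have pairZ : ∀ z ∈ Z, pair z ∈ Z := fun z h => (hz z h).1
  have pairinv : ∀ z ∈ Z, pair (pair z) = z := fun z h => (hz z h).2.2.1
  -- every vertex is in X ∪ Y ∪ Z
  have hall : ∀ v : V, v ∈ X ∨ v ∈ Y ∨ v ∈ Z := by
    intro v
    have : v ∈ X ∪ Y ∪ Z := by rw [hcover]; trivial
    rcases this with (h | h) | h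
    exacts [Or.inl h, Or.inr (Or.inl h), Or.inr (Or.inr h)]
  -- classification of edges of N touching Z
  have zends : ∀ e ∈ N, ∀ z ∈ Z, z ∈ e → e = s(z, pair z) ∨ e = s(z, att z) := by
    intro e he z hzz hze
    have he' := hN.1 e he
    induction e using Sym2.ind with
    | _ a b =>
      rw [SimpleGraph.mem_edgeSet] at he'
      rw [Sym2.mem_iff] at hze
      rcases hze with rfl | rfl
      · rcases z_nbr hz hzz he' with h | h
        · exact Or.inl (by rw [← h])
        · exact Or.inr (by rw [← h])
      · rcases z_nbr hz hzz he'.symm with h | h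
        · exact Or.inl (by rw [← h, Sym2.eq_swap])
        · exact Or.inr (by rw [← h, Sym2.eq_swap])
  -- edges not touching Z contain an X vertex
  have xyends : ∀ e ∈ N, (¬ ∃ z, z ∈ Z ∧ z ∈ e) → ∃ x, x ∈ X ∧ x ∈ e := by
    intro e he hnz
    have he' := hN.1 e he
    induction e using Sym2.ind with
    | _ a b =>
      rw [SimpleGraph.mem_edgeSet] at he'
      have ha : a ∉ Z := fun h => hnz ⟨a, h, by rw [Sym2.mem_iff]; left; rfl⟩
      have hb : b ∉ Z := fun h => hnz ⟨b, h, by rw [Sym2.mem_iff]; right; rfl⟩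
      rcases hall a with hA | hA | hA
      · exact ⟨a, hA, by rw [Sym2.mem_iff]; left; rfl⟩
      · rcases hall b with hB | hB | hB
        · exact ⟨b, hB, by rw [Sym2.mem_iff]; right; rfl⟩
        · exact absurd he' (hYind _ hA _ hB)
        · exact absurd hB hb
      · exact absurd hA ha
  -- the injection
  set ff : Sym2 V → Sym2 V := fun e =>
    if h : ∃ z, z ∈ Z ∧ z ∈ e then s(h.choose, pair h.choose)
    else if h2 : ∃ x, x ∈ X ∧ x ∈ e then s(h2.choose, cwY G Y h2.choose) else e with hff
  apply Finset.card_le_card_of_injOn ff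
  · intro e he
    rw [Finset.mem_coe, cwM_mem]
    by_cases h : ∃ z, z ∈ Z ∧ z ∈ e
    · rw [hff]; simp only [dif_pos h]
      exact Or.inr ⟨h.choose, h.choose_spec.1, rfl⟩
    · have h2 := xyends e he h
      rw [hff]; simp only [dif_neg h, dif_pos h2]
      exact Or.inl ⟨h2.choose, h2.choose_spec.1, rfl⟩
  · intro e he f hf heq
    by_contra hef
    have key : ∀ v : V, v ∈ e → v ∈ f → False := fun v h1 h2 => hN.2 e he f hf hef v h1 h2
    by_cases h : ∃ z, z ∈ Z ∧ z ∈ e <;> by_cases h' : ∃ z, z ∈ Z ∧ z ∈ f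
    · -- both touch Z
      obtain ⟨hzZ, hze⟩ := h.choose_spec
      obtain ⟨hzZ', hzf⟩ := h'.choose_spec
      set z := h.choose
      set z' := h'.choose
      rw [hff] at heq; simp only [dif_pos h, dif_pos h'] at heq
      rw [Sym2.eq_iff] at heq
      rcases heq with ⟨h1, _⟩ | ⟨h1, h2⟩
      · exact key z hze (by rw [show z = z' from h1]; exact hzf)
      · -- z = pair z', pair z = z'
        have hz'e : z' = pair z := h2.symm
        have hatt : att z' = att z := by
          rw [hz'e, (hz z hzZ).2.2.2.2.1]
        rcases zends e he z hzZ hze with he1 | he1 <;>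
          rcases zends f hf z' hzZ' hzf with hf1 | hf1
        · -- e = s(z, pair z), f = s(z', pair z'); pair z' = z
          exact key z hze (by rw [hf1, Sym2.mem_iff]; right; exact h1)
        · -- f = s(z', att z'); z' = pair z ∈ e
          exact key z' (by rw [he1, Sym2.mem_iff]; right; exact hz'e) hzf
        · exact key z hze (by rw [hf1, Sym2.mem_iff]; right; exact h1)
        · -- e = s(z,att z), f = s(z', att z'), att z' = att z
          exact key (att z) (by rw [he1, Sym2.mem_iff]; right; rfl)
            (by rw [hf1, Sym2.mem_iff]; right; exact hatt.symm)
    · -- e touches Z, f does not: impossible since images equal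
      have h2' := xyends f hf h'
      rw [hff] at heq; simp only [dif_pos h, dif_neg h', dif_pos h2'] at heq
      rw [Sym2.eq_iff] at heq
      have hzZ := h.choose_spec.1
      have hxX := h2'.choose_spec.1
      rcases heq with ⟨h1, _⟩ | ⟨_, h2⟩
      · exact hXZ.ne_of_mem hxX (h1 ▸ hzZ) rfl
      · exact hXZ.ne_of_mem hxX (h2 ▸ (hz _ hzZ).1) rfl
    · have h2' := xyends e he h
      rw [hff] at heq; simp only [dif_neg h, dif_pos h', dif_pos h2'] at heq
      rw [Sym2.eq_iff] at heq
      have hzZ := h'.choose_spec.1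
      have hxX := h2'.choose_spec.1
      rcases heq with ⟨h1, _⟩ | ⟨h1, h2⟩
      · exact hXZ.ne_of_mem hxX (h1 ▸ hzZ) rfl
      · exact hXZ.ne_of_mem hxX (h1 ▸ (hz _ hzZ).1) rfl
    · -- neither touches Z
      have h2 := xyends e he h
      have h2' := xyends f hf h'
      rw [hff] at heq; simp only [dif_neg h, dif_neg h', dif_pos h2, dif_pos h2'] at heq
      rw [Sym2.eq_iff] at heq
      have hxX := h2.choose_spec.1
      have hxX' := h2'.choose_spec.1
      have hY := (cwY_spec hleaf hxX).1
      have hY' := (cwY_spec hleaf hxX').1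
      rcases heq with ⟨h1, _⟩ | ⟨h1, _⟩
      · exact key h2.choose h2.choose_spec.2 (h1 ▸ h2'.choose_spec.2)
      · exact hXY.ne_of_mem hxX (h1 ▸ hY') h1
end CW

end CWAux

section Forward
/-- Vertices covered by a set of edges. -/
def Scov (M : Finset (Sym2 V)) : Set V := {v | ∃ e ∈ M, v ∈ e}

section Fwd
variable {G : SimpleGraph V} {M : Finset (Sym2 V)}
  (hM : G.IsInducedMatchingSet M)
  (hmax : ∀ N : Finset (Sym2 V), G.IsMatchingSet N → N.card ≤ M.card)

include hM in
lemma edge_unique {e f : Sym2 V} (he : e ∈ M) (hf : f ∈ M) {v : V}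
    (hv : v ∈ e) (hv' : v ∈ f) : e = f := by
  by_contra h
  exact hM.1.2 e he f hf h v hv hv'

lemma mem_Scov {v : V} {e : Sym2 V} (he : e ∈ M) (hv : v ∈ e) : v ∈ Scov M := ⟨e, he, hv⟩

include hM hmax in
/-- No edge joins two uncovered vertices. -/
lemma F1 {u v : V} (hu : u ∉ Scov M) (hv : v ∉ Scov M) : ¬ G.Adj u v := by
  intro hadj
  have hnotmem : s(u, v) ∉ M := fun h => hu (mem_Scov h (by rw [Sym2.mem_iff]; left; rfl))
  have hmatch : G.IsMatchingSet (insert s(u, v) M) := by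
    constructor
    · intro e he
      rcases Finset.mem_insert.mp he with rfl | he
      · exact G.mem_edgeSet.mpr hadj
      · exact hM.1.1 e he
    · intro e he f hf hef x hxe hxf
      rcases Finset.mem_insert.mp he with he' | he'
      · rcases Finset.mem_insert.mp hf with hf' | hf'
        · exact hef (he'.trans hf'.symm)
        · rw [he', Sym2.mem_iff] at hxe
          rcases hxe with rfl | rfl
          · exact hu (mem_Scov hf' hxf)
          · exact hv (mem_Scov hf' hxf)
      · rcases Finset.mem_insert.mp hf with hf' | hf'
        · rw [hf', Sym2.mem_iff] at hxf
          rcases hxf with rfl | rfl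
          · exact hu (mem_Scov he' hxe)
          · exact hv (mem_Scov he' hxe)
        · exact hM.1.2 e he' f hf' hef x hxe hxf
  have := hmax _ hmatch
  rw [Finset.card_insert_of_notMem hnotmem] at this
  omega

include hM hmax in
/-- The key swap lemma: an `M`-edge cannot have two distinct uncovered
vertices attached to its two ends. -/
lemma F2 {e : Sym2 V} (he : e ∈ M) {a b u w : V} (heab : e = s(a, b))
    (hu : u ∉ Scov M) (hw : w ∉ Scov M) (huw : u ≠ w)
    (hua : G.Adj u a) (hwb : G.Adj w b) : False := by
  have haS : a ∈ Scov M := mem_Scov he (by rw [heab, Sym2.mem_iff]; left; rfl)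
  have hbS : b ∈ Scov M := mem_Scov he (by rw [heab, Sym2.mem_iff]; right; rfl)
  have hab : a ≠ b := by
    intro h
    have := hM.1.1 e he
    rw [heab, h, SimpleGraph.mem_edgeSet] at this
    exact G.irrefl this
  have hane : ∀ f ∈ M, f ≠ e → a ∉ f := by
    intro f hf hfe haf
    exact hfe (edge_unique hM hf he haf (by rw [heab, Sym2.mem_iff]; left; rfl))
  have hbne : ∀ f ∈ M, f ≠ e → b ∉ f := by
    intro f hf hfe hbf
    exact hfe (edge_unique hM hf he hbf (by rw [heab, Sym2.mem_iff]; right; rfl))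
  set N : Finset (Sym2 V) := insert s(u, a) (insert s(w, b) (M.erase e)) with hN
  have hsc : ∀ {x : V} {f : Sym2 V}, f ∈ M.erase e → x ∈ f → x ∈ Scov M :=
    fun hf hx => mem_Scov (Finset.mem_of_mem_erase hf) hx
  have h1 : s(u, a) ≠ s(w, b) := by
    intro h
    rw [Sym2.eq_iff] at h
    rcases h with ⟨h', _⟩ | ⟨h', _⟩
    · exact huw h'
    · exact hu (by rw [h']; exact hbS)
  have h2 : s(u, a) ∉ insert s(w, b) (M.erase e) := by
    rw [Finset.mem_insert]
    rintro (h | h)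
    · exact h1 h
    · exact hu (hsc h (by rw [Sym2.mem_iff]; left; rfl))
  have h3 : s(w, b) ∉ M.erase e := fun h => hw (hsc h (by rw [Sym2.mem_iff]; left; rfl))
  have hcard : N.card = M.card + 1 := by
    rw [hN, Finset.card_insert_of_notMem h2, Finset.card_insert_of_notMem h3,
      Finset.card_erase_of_mem he]
    have : 1 ≤ M.card := Finset.card_pos.mpr ⟨e, he⟩
    omega
  have hmatch : G.IsMatchingSet N := by
    constructor
    · intro f hf
      rw [hN, Finset.mem_insert, Finset.mem_insert] at hf
      rcases hf with rfl | rfl | hf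
      · exact G.mem_edgeSet.mpr hua
      · exact G.mem_edgeSet.mpr hwb
      · exact hM.1.1 f (Finset.mem_of_mem_erase hf)
    · intro f hf g hg hfg x hxf hxg
      rw [hN, Finset.mem_insert, Finset.mem_insert] at hf hg
      have case_ua : ∀ {g' : Sym2 V}, g' ∈ M.erase e → x ∈ s(u, a) → x ∈ g' → False := by
        intro g' hg' hx1 hx2
        rw [Sym2.mem_iff] at hx1
        rcases hx1 with rfl | rfl
        · exact hu (hsc hg' hx2)
        · exact hane g' (Finset.mem_of_mem_erase hg') (Finset.ne_of_mem_erase hg') hx2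
      have case_wb : ∀ {g' : Sym2 V}, g' ∈ M.erase e → x ∈ s(w, b) → x ∈ g' → False := by
        intro g' hg' hx1 hx2
        rw [Sym2.mem_iff] at hx1
        rcases hx1 with rfl | rfl
        · exact hw (hsc hg' hx2)
        · exact hbne g' (Finset.mem_of_mem_erase hg') (Finset.ne_of_mem_erase hg') hx2
      have case_mid : x ∈ s(u, a) → x ∈ s(w, b) → False := by
        intro hx1 hx2
        rw [Sym2.mem_iff] at hx1 hx2
        rcases hx1 with rfl | rfl
        · rcases hx2 with h | h
          · exact huw h
          · exact hu (by rw [h]; exact hbS)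
        · rcases hx2 with h | h
          · exact hw (by rw [← h]; exact haS)
          · exact hab h
      rcases hf with rfl | rfl | hf <;> rcases hg with rfl | rfl | hg
      · exact absurd rfl hfg
      · exact case_mid hxf hxg
      · exact case_ua hg hxf hxg
      · exact case_mid hxg hxf
      · exact absurd rfl hfg
      · exact case_wb hg hxf hxg
      · exact case_ua hf hxg hxf
      · exact case_wb hf hxg hxf
      · exact hM.1.2 f (Finset.mem_of_mem_erase hf) g (Finset.mem_of_mem_erase hg) hfg x hxf hxg
  have := hmax _ hmatch
  omega

include hM hmax in
lemma repAB {e : Sym2 V} (he : e ∈ M) :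
    ∃ p : V × V, e = s(p.1, p.2) ∧ G.Adj p.1 p.2 ∧
      ∀ u, u ∉ Scov M → G.Adj u p.2 → G.Adj u p.1 := by
  have he' := hM.1.1 e he
  induction e using Sym2.ind with
  | _ a b =>
    rw [SimpleGraph.mem_edgeSet] at he'
    by_cases hob : ∃ u, u ∉ Scov M ∧ G.Adj u b
    · obtain ⟨u₀, hu₀, hu₀b⟩ := hob
      by_cases hoa : ∃ u, u ∉ Scov M ∧ G.Adj u a
      · obtain ⟨u₁, hu₁, hu₁a⟩ := hoa
        have h01 : u₁ = u₀ := by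
          by_contra h
          exact F2 hM hmax he rfl hu₁ hu₀ h hu₁a hu₀b
        refine ⟨(a, b), rfl, he', ?_⟩
        intro u hu hub
        have : u = u₁ := by
          by_contra h
          exact F2 hM hmax he rfl hu₁ hu (fun hh => h hh.symm) hu₁a hub
        rw [this]; exact hu₁a
      · refine ⟨(b, a), Sym2.eq_swap.symm, he'.symm, ?_⟩
        intro u hu hua
        exact absurd ⟨u, hu, hua⟩ hoa
    · refine ⟨(a, b), rfl, he', ?_⟩
      intro u hu hub
      exact absurd ⟨u, hu, hub⟩ hob

end Fwd

section Defs
variable (G : SimpleGraph V) (M : Finset (Sym2 V))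

noncomputable def ABp (e : Sym2 V) : V × V :=
  if h : ∃ p : V × V, e = s(p.1, p.2) ∧ G.Adj p.1 p.2 ∧
      ∀ u, u ∉ Scov M → G.Adj u p.2 → G.Adj u p.1 then h.choose else e.out

noncomputable def Ae (e : Sym2 V) : V := (ABp G M e).1
noncomputable def Be (e : Sym2 V) : V := (ABp G M e).2

def isTe (e : Sym2 V) : Prop := ∃ u, u ∉ Scov M ∧ G.Adj u (Be G M e)

noncomputable def apexF (e : Sym2 V) : V := if h : isTe G M e then h.choose else e.out.1

def Zs : Set V := {v | ∃ e ∈ M, isTe G M e ∧ v ∈ e}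
def Xs : Set V := {v | ∃ e ∈ M, ¬ isTe G M e ∧ v = Ae G M e}

noncomputable def pairF (v : V) : V :=
  if h : ∃ e, e ∈ M ∧ v ∈ e then
    (if v = Ae G M h.choose then Be G M h.choose else Ae G M h.choose) else v

noncomputable def attF (v : V) : V :=
  if h : ∃ e, e ∈ M ∧ v ∈ e then apexF G M h.choose else v

end Defs

section Fwd2
variable {G : SimpleGraph V} {M : Finset (Sym2 V)}
  (hM : G.IsInducedMatchingSet M)
  (hmax : ∀ N : Finset (Sym2 V), G.IsMatchingSet N → N.card ≤ M.card)

include hM hmax in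
lemma ABspec {e : Sym2 V} (he : e ∈ M) :
    e = s(Ae G M e, Be G M e) ∧ G.Adj (Ae G M e) (Be G M e) ∧
      ∀ u, u ∉ Scov M → G.Adj u (Be G M e) → G.Adj u (Ae G M e) := by
  have h := repAB hM hmax he
  rw [Ae, Be, ABp, dif_pos h]
  exact h.choose_spec

include hM hmax in
lemma AmemE {e : Sym2 V} (he : e ∈ M) : Ae G M e ∈ e := by
  have h : Ae G M e ∈ s(Ae G M e, Be G M e) := by rw [Sym2.mem_iff]; left; rfl
  rwa [← (ABspec hM hmax he).1] at h

include hM hmax in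
lemma BmemE {e : Sym2 V} (he : e ∈ M) : Be G M e ∈ e := by
  have h : Be G M e ∈ s(Ae G M e, Be G M e) := by rw [Sym2.mem_iff]; right; rfl
  rwa [← (ABspec hM hmax he).1] at h

include hM hmax in
lemma AneB {e : Sym2 V} (he : e ∈ M) : Ae G M e ≠ Be G M e :=
  G.ne_of_adj (ABspec hM hmax he).2.1

include hM hmax in
lemma mem_AB {e : Sym2 V} (he : e ∈ M) {v : V} (hv : v ∈ e) :
    v = Ae G M e ∨ v = Be G M e := by
  rw [(ABspec hM hmax he).1, Sym2.mem_iff] at hv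
  exact hv

include hM hmax in
lemma apex_spec {e : Sym2 V} (he : e ∈ M) (ht : isTe G M e) :
    apexF G M e ∉ Scov M ∧ G.Adj (apexF G M e) (Be G M e) ∧
      G.Adj (apexF G M e) (Ae G M e) := by
  rw [apexF, dif_pos ht]
  refine ⟨ht.choose_spec.1, ht.choose_spec.2, ?_⟩
  exact (ABspec hM hmax he).2.2 _ ht.choose_spec.1 ht.choose_spec.2

include hM hmax in
lemma apex_unique {e : Sym2 V} (he : e ∈ M) (ht : isTe G M e) {u : V}
    (hu : u ∉ Scov M) (hadj : G.Adj u (Ae G M e) ∨ G.Adj u (Be G M e)) :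
    u = apexF G M e := by
  obtain ⟨hap, hapB, hapA⟩ := apex_spec hM hmax he ht
  by_contra h
  rcases hadj with hadj | hadj
  · exact F2 hM hmax he (ABspec hM hmax he).1 hu hap h hadj hapB
  · exact F2 hM hmax he (ABspec hM hmax he).1 hap hu (fun hh => h hh.symm) hapA hadj

include hM in
lemma pairF_edge {e : Sym2 V} (he : e ∈ M) {v : V} (hv : v ∈ e) :
    pairF G M v = if v = Ae G M e then Be G M e else Ae G M e := by
  have h : ∃ f, f ∈ M ∧ v ∈ f := ⟨e, he, hv⟩
  rw [pairF, dif_pos h, edge_unique hM h.choose_spec.1 he h.choose_spec.2 hv]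

include hM in
lemma attF_edge {e : Sym2 V} (he : e ∈ M) {v : V} (hv : v ∈ e) :
    attF G M v = apexF G M e := by
  have h : ∃ f, f ∈ M ∧ v ∈ f := ⟨e, he, hv⟩
  rw [attF, dif_pos h, edge_unique hM h.choose_spec.1 he h.choose_spec.2 hv]

include hM hmax in
lemma pairF_A {e : Sym2 V} (he : e ∈ M) : pairF G M (Ae G M e) = Be G M e := by
  rw [pairF_edge hM he (AmemE hM hmax he), if_pos rfl]

include hM hmax in
lemma pairF_B {e : Sym2 V} (he : e ∈ M) : pairF G M (Be G M e) = Ae G M e := by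
  rw [pairF_edge hM he (BmemE hM hmax he), if_neg (Ne.symm (AneB hM hmax he))]

include hM hmax in
/-- All neighbours of a vertex of a triangle edge. -/
lemma T_nbrs {e : Sym2 V} (he : e ∈ M) (ht : isTe G M e) {z u : V} (hz : z ∈ e)
    (hadj : G.Adj z u) : (u ∈ e ∧ u ≠ z) ∨ u = apexF G M e := by
  by_cases hus : u ∈ Scov M
  · obtain ⟨f, hf, huf⟩ := hus
    have hfe : f = e := by
      by_contra h
      exact hM.2 e he f hf (fun hh => h hh.symm) z u hz huf hadj
    exact Or.inl ⟨hfe ▸ huf, fun hh => G.irrefl (hh ▸ hadj)⟩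
  · right
    rcases mem_AB hM hmax he hz with rfl | rfl
    · exact apex_unique hM hmax he ht hus (Or.inl hadj.symm)
    · exact apex_unique hM hmax he ht hus (Or.inr hadj.symm)

include hM hmax in
/-- Tails of plain edges are leaves. -/
lemma P_leaf {e : Sym2 V} (he : e ∈ M) (ht : ¬ isTe G M e) {u : V}
    (hadj : G.Adj (Be G M e) u) : u = Ae G M e := by
  by_cases hus : u ∈ Scov M
  · obtain ⟨f, hf, huf⟩ := hus
    have hfe : f = e := by
      by_contra h
      exact hM.2 e he f hf (fun hh => h hh.symm) _ u (BmemE hM hmax he) huf hadj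
    rcases mem_AB hM hmax he (hfe ▸ huf) with rfl | rfl
    · rfl
    · exact absurd hadj (G.irrefl)
  · exact absurd ⟨u, hus, hadj.symm⟩ ht

lemma closed_reach {C : Set V} {G : SimpleGraph V}
    (hcl : ∀ u ∈ C, ∀ v, G.Adj u v → v ∈ C) {a b : V} (w : G.Walk a b) (ha : a ∈ C) :
    b ∈ C := by
  induction w with
  | nil => exact ha
  | cons h p ih => exact ih (hcl _ ha _ h)

include hM hmax in
lemma fwd_starTriangle (hconn : G.Connected) (hMne : M.Nonempty)
    (hall : ∀ e ∈ M, isTe G M e) : G.IsStarTriangleGraph := by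
  obtain ⟨e₀, he₀⟩ := hMne
  set c := apexF G M e₀ with hc
  have hcS : c ∉ Scov M := (apex_spec hM hmax he₀ (hall e₀ he₀)).1
  set C : Set V := {v | v = c ∨ ∃ e ∈ M, v ∈ e ∧ apexF G M e = c} with hCdef
  -- C is closed under adjacency
  have hcl : ∀ u ∈ C, ∀ v, G.Adj u v → v ∈ C := by
    intro u hu v hadj
    rcases hu with rfl | ⟨e, he, hue, hape⟩
    · -- u = c
      by_cases hv : v ∈ Scov M
      · obtain ⟨e, he, hve⟩ := hv
        right
        refine ⟨e, he, hve, ?_⟩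
        exact (apex_unique hM hmax he (hall e he) hcS
          (by rcases mem_AB hM hmax he hve with rfl | rfl
              · exact Or.inl hadj
              · exact Or.inr hadj)).symm
      · exact absurd hadj (F1 hM hmax hcS hv)
    · rcases T_nbrs hM hmax he (hall e he) hue hadj with ⟨hve, _⟩ | hv
      · exact Or.inr ⟨e, he, hve, hape⟩
      · rw [hv, hape]; exact Or.inl rfl
  have hC : ∀ v, v ∈ C := by
    intro v
    exact closed_reach hcl (hconn.preconnected c v).some (Or.inl rfl)
  have hmem : ∀ v : V, v ≠ c → ∃ e ∈ M, v ∈ e ∧ apexF G M e = c := by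
    intro v hv
    rcases hC v with h | h
    · exact absurd h hv
    · exact h
  refine ⟨c, pairF G M, ⟨Ae G M e₀, ?_⟩, ?_, ?_⟩
  · intro h
    exact hcS (h ▸ mem_Scov he₀ (AmemE hM hmax he₀))
  · intro v hv
    obtain ⟨e, he, hve, hape⟩ := hmem v hv
    have hAS : Ae G M e ∈ Scov M := mem_Scov he (AmemE hM hmax he)
    have hBS : Be G M e ∈ Scov M := mem_Scov he (BmemE hM hmax he)
    rcases mem_AB hM hmax he hve with rfl | rfl
    · rw [pairF_A hM hmax he]
      refine ⟨Ne.symm (AneB hM hmax he), fun h => hcS (h ▸ hBS), ?_⟩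
      rw [pairF_B hM hmax he]
    · rw [pairF_B hM hmax he]
      refine ⟨AneB hM hmax he, fun h => hcS (h ▸ hAS), ?_⟩
      rw [pairF_A hM hmax he]
  · intro u v
    constructor
    · intro hadj
      by_cases huc : u = c
      · exact Or.inl ⟨huc, fun hvc => G.irrefl (huc ▸ hvc ▸ hadj)⟩
      · by_cases hvc : v = c
        · exact Or.inr (Or.inl ⟨hvc, huc⟩)
        · refine Or.inr (Or.inr ⟨huc, hvc, ?_⟩)
          obtain ⟨e, he, hue, hape⟩ := hmem u huc
          rcases T_nbrs hM hmax he (hall e he) hue hadj with ⟨hve, hvu⟩ | hv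
          · -- v ∈ e, v ≠ u
            rcases mem_AB hM hmax he hue with h1 | h1 <;>
              rcases mem_AB hM hmax he hve with h2 | h2
            · exact absurd (h1.trans h2.symm) (Ne.symm hvu)
            · rw [h1, pairF_A hM hmax he, ← h2]
            · rw [h1, pairF_B hM hmax he, ← h2]
            · exact absurd (h1.trans h2.symm) (Ne.symm hvu)
          · exact absurd (hv.trans hape) hvc
    · rintro (⟨rfl, hvc⟩ | ⟨rfl, huc⟩ | ⟨huc, hvc, rfl⟩)
      · obtain ⟨e, he, hve, hape⟩ := hmem v hvc
        have := apex_spec hM hmax he (hall e he)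
        rcases mem_AB hM hmax he hve with rfl | rfl
        · exact hape ▸ this.2.2
        · exact hape ▸ this.2.1
      · obtain ⟨e, he, hue, hape⟩ := hmem u huc
        have := apex_spec hM hmax he (hall e he)
        rcases mem_AB hM hmax he hue with rfl | rfl
        · exact (hape ▸ this.2.2).symm
        · exact (hape ▸ this.2.1).symm
      · obtain ⟨e, he, hue, hape⟩ := hmem u huc
        rcases mem_AB hM hmax he hue with rfl | rfl
        · rw [pairF_A hM hmax he]
          exact (ABspec hM hmax he).2.1
        · rw [pairF_B hM hmax he]
          exact (ABspec hM hmax he).2.1.symm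

include hM hmax in
lemma fwd_CW (hconn : G.Connected) (hP : ∃ e ∈ M, ¬ isTe G M e) :
    G.IsCWBipartiteWithPendantTriangles := by
  obtain ⟨e₁, he₁, ht₁⟩ := hP
  set X : Set V := Xs G M with hXdef
  set Z : Set V := Zs G M with hZdef
  set Y : Set V := (X ∪ Z)ᶜ with hYdef
  have hXS : ∀ v ∈ X, v ∈ Scov M := by
    rintro v ⟨e, he, _, rfl⟩
    exact mem_Scov he (AmemE hM hmax he)
  have hZS : ∀ v ∈ Z, v ∈ Scov M := by
    rintro v ⟨e, he, _, hv⟩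
    exact mem_Scov he hv
  have hXZ : Disjoint X Z := by
    rw [Set.disjoint_left]
    rintro v ⟨e, he, hte, rfl⟩ ⟨f, hf, htf, hvf⟩
    exact hte (edge_unique hM hf he hvf (AmemE hM hmax he) ▸ htf)
  have hXY : Disjoint X Y := by
    rw [Set.disjoint_left]
    exact fun v hv hv' => hv' (Or.inl hv)
  have hYZ : Disjoint Y Z := by
    rw [Set.disjoint_left]
    exact fun v hv hv' => hv (Or.inr hv')
  have hmemXY : ∀ v, v ∈ X ∪ Y ↔ v ∉ Z := by
    intro v
    constructor
    · rintro (h | h)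
      · exact fun h' => Set.disjoint_left.mp hXZ h h'
      · exact fun h' => h (Or.inr h')
    · intro h
      by_cases hx : v ∈ X
      · exact Or.inl hx
      · exact Or.inr (fun h' => h'.elim hx h)
  have hYchar : ∀ v ∈ Y, v ∉ Scov M ∨ ∃ e ∈ M, ¬ isTe G M e ∧ v = Be G M e := by
    intro v hv
    by_cases hs : v ∈ Scov M
    · obtain ⟨e, he, hve⟩ := hs
      right
      by_cases ht : isTe G M e
      · exact absurd (Or.inr ⟨e, he, ht, hve⟩ : v ∈ X ∪ Z) hv
      · rcases mem_AB hM hmax he hve with h | h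
        · exact absurd (Or.inl ⟨e, he, ht, h⟩ : v ∈ X ∪ Z) hv
        · exact ⟨e, he, ht, h⟩
    · exact Or.inl hs
  have hcover : X ∪ Y ∪ Z = Set.univ := by
    rw [Set.eq_univ_iff_forall]
    intro v
    by_cases h : v ∈ Z
    · exact Or.inr h
    · exact Or.inl ((hmemXY v).mpr h)
  have hXne : X.Nonempty := ⟨Ae G M e₁, e₁, he₁, ht₁, rfl⟩
  have hXind : ∀ u ∈ X, ∀ v ∈ X, ¬ G.Adj u v := by
    rintro u ⟨e, he, _, rfl⟩ v ⟨f, hf, _, rfl⟩ hadj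
    by_cases hef : e = f
    · subst hef
      exact G.irrefl hadj
    · exact hM.2 e he f hf hef _ _ (AmemE hM hmax he) (AmemE hM hmax hf) hadj
  have hYind : ∀ u ∈ Y, ∀ v ∈ Y, ¬ G.Adj u v := by
    intro u hu v hv hadj
    rcases hYchar u hu with hu' | ⟨e, he, hte, rfl⟩
    · rcases hYchar v hv with hv' | ⟨f, hf, htf, rfl⟩
      · exact F1 hM hmax hu' hv' hadj
      · exact htf ⟨u, hu', hadj⟩
    · rcases hYchar v hv with hv' | ⟨f, hf, htf, rfl⟩
      · exact hte ⟨v, hv', hadj.symm⟩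
      · by_cases hef : e = f
        · subst hef
          exact G.irrefl hadj
        · exact hM.2 e he f hf hef _ _ (BmemE hM hmax he) (BmemE hM hmax hf) hadj
  -- pair/att structure on Z
  have hzmain : ∀ z ∈ Z, pairF G M z ∈ Z ∧ pairF G M z ≠ z ∧
      pairF G M (pairF G M z) = z ∧ attF G M z ∈ Y ∧
      attF G M (pairF G M z) = attF G M z ∧
      ∀ u : V, G.Adj z u ↔ (u = pairF G M z ∨ u = attF G M z) := by
    rintro z ⟨e, he, hte, hze⟩
    have hattz : attF G M z = apexF G M e := attF_edge hM he hze
    have hap := apex_spec hM hmax he hte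
    have hpz : pairF G M z ∈ e ∧ pairF G M z ≠ z ∧ pairF G M (pairF G M z) = z := by
      rcases mem_AB hM hmax he hze with rfl | rfl
      · rw [pairF_A hM hmax he]
        exact ⟨BmemE hM hmax he, Ne.symm (AneB hM hmax he), pairF_B hM hmax he⟩
      · rw [pairF_B hM hmax he]
        exact ⟨AmemE hM hmax he, AneB hM hmax he, pairF_A hM hmax he⟩
    refine ⟨⟨e, he, hte, hpz.1⟩, hpz.2.1, hpz.2.2, ?_, ?_, ?_⟩
    · rw [hattz]
      intro h
      rcases h with h | h
      · exact hap.1 (hXS _ h)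
      · exact hap.1 (hZS _ h)
    · rw [attF_edge hM he hpz.1, hattz]
    · intro u
      constructor
      · intro hadj
        rcases T_nbrs hM hmax he hte hze hadj with ⟨hue, huz⟩ | h
        · left
          rcases mem_AB hM hmax he hze with h1 | h1 <;>
            rcases mem_AB hM hmax he hue with h2 | h2
          · exact absurd (h2.trans h1.symm) huz
          · rw [h1, pairF_A hM hmax he, ← h2]
          · rw [h1, pairF_B hM hmax he, ← h2]
          · exact absurd (h2.trans h1.symm) huz
        · right; rw [hattz, h]
      · rintro (rfl | rfl)
        · rcases mem_AB hM hmax he hze with h1 | h1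
          · rw [h1, pairF_A hM hmax he]
            exact h1 ▸ (ABspec hM hmax he).2.1
          · rw [h1, pairF_B hM hmax he]
            exact h1 ▸ (ABspec hM hmax he).2.1.symm
        · rw [hattz]
          rcases mem_AB hM hmax he hze with rfl | rfl
          · exact hap.2.2.symm
          · exact hap.2.1.symm
  have hleaf : ∀ x ∈ X, ∃ y ∈ Y, G.neighborSet y = {x} := by
    rintro x ⟨e, he, hte, rfl⟩
    refine ⟨Be G M e, ?_, ?_⟩
    · intro h
      rcases h with h | h
      · obtain ⟨f, hf, htf, hBf⟩ := h
        have hBef : Be G M e ∈ f := by rw [hBf]; exact AmemE hM hmax hf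
        have hfe : f = e := edge_unique hM hf he hBef (BmemE hM hmax he)
        exact (AneB hM hmax he) (hfe ▸ hBf).symm
      · obtain ⟨f, hf, htf, hBf⟩ := h
        exact hte (edge_unique hM hf he hBf (BmemE hM hmax he) ▸ htf)
    · ext u
      simp only [mem_neighborSet, Set.mem_singleton_iff]
      constructor
      · exact P_leaf hM hmax he hte
      · rintro rfl
        exact (ABspec hM hmax he).2.1.symm
  -- connectivity of the bipartite part
  set img : V → V := fun v => if v ∈ Z then attF G M v else v with himgdef
  have himgY : ∀ v ∈ Z, attF G M v ∈ Y := by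
    rintro v ⟨e, he, hte, hve⟩
    rw [attF_edge hM he hve]
    intro h
    rcases h with h | h
    · exact (apex_spec hM hmax he hte).1 (hXS _ h)
    · exact (apex_spec hM hmax he hte).1 (hZS _ h)
  have himgmem : ∀ v, img v ∈ X ∪ Y := by
    intro v
    by_cases h : v ∈ Z
    · rw [himgdef]; simp only [if_pos h]
      exact Or.inr (himgY v h)
    · rw [himgdef]; simp only [if_neg h]
      exact (hmemXY v).mpr h
  have hZstep : ∀ u v : V, u ∈ Z → v ∉ Z → G.Adj u v → attF G M u = v := by
    intro u v hu hv hadj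
    obtain ⟨e, he, hte, hue⟩ := hu
    rcases T_nbrs hM hmax he hte hue hadj with ⟨hve, _⟩ | h
    · exact absurd ⟨e, he, hte, hve⟩ hv
    · rw [attF_edge hM he hue, h]
  have hstep : ∀ u v : V, G.Adj u v → img u = img v ∨ G.Adj (img u) (img v) := by
    intro u v hadj
    by_cases hu : u ∈ Z <;> by_cases hv : v ∈ Z
    · left
      obtain ⟨e, he, hte, hue⟩ := id hu
      rcases T_nbrs hM hmax he hte hue hadj with ⟨hve, _⟩ | h
      · rw [himgdef]; simp only [if_pos hu, if_pos hv]
        rw [attF_edge hM he hue, attF_edge hM he hve]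
      · exact absurd (hZS v hv) (h ▸ (apex_spec hM hmax he hte).1)
    · left
      rw [himgdef]; simp only [if_pos hu, if_neg hv]
      exact hZstep u v hu hv hadj
    · left
      rw [himgdef]; simp only [if_neg hu, if_pos hv]
      exact (hZstep v u hv hu hadj.symm).symm
    · right
      rw [himgdef]; simp only [if_neg hu, if_neg hv]
      exact hadj
  have hreach : ∀ (a b : V) (w : G.Walk a b),
      (G.induce (X ∪ Y)).Reachable ⟨img a, himgmem a⟩ ⟨img b, himgmem b⟩ := by
    intro a b w
    induction w with
    | nil => exact Reachable.refl _
    | @cons x y b h p ih =>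
      rcases hstep x y h with heq | hadj
      · have h1 : (⟨img x, himgmem x⟩ : ↥(X ∪ Y)) = ⟨img y, himgmem y⟩ := Subtype.ext heq
        rw [h1]
        exact ih
      · exact (Adj.reachable
          (show (G.induce (X ∪ Y)).Adj ⟨img x, himgmem x⟩ ⟨img y, himgmem y⟩ from hadj)).trans ih
  refine ⟨X, Y, Z, pairF G M, attF G M, hXY, hXZ, hYZ, hcover, hXne, hXind, hYind,
    hzmain, hleaf, ?_⟩
  rw [connected_iff]
  constructor
  · rintro ⟨u, hu⟩ ⟨v, hv⟩
    have huZ : u ∉ Z := (hmemXY u).mp hu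
    have hvZ : v ∉ Z := (hmemXY v).mp hv
    have hr := hreach u v (hconn.preconnected u v).some
    have h1 : (⟨img u, himgmem u⟩ : ↥(X ∪ Y)) = ⟨u, hu⟩ := by
      apply Subtype.ext
      show (if u ∈ Z then attF G M u else u) = u
      exact if_neg huZ
    have h2 : (⟨img v, himgmem v⟩ : ↥(X ∪ Y)) = ⟨v, hv⟩ := by
      apply Subtype.ext
      show (if v ∈ Z then attF G M v else v) = v
      exact if_neg hvZ
    rwa [h1, h2] at hr
  · obtain ⟨x, hx⟩ := hXne
    exact ⟨⟨x, Or.inl hx⟩⟩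

end Fwd2


end Forward

section Aux
variable [Fintype V] {G : SimpleGraph V}

lemma empty_isMatchingSet : G.IsMatchingSet ∅ :=
  ⟨fun e he => absurd he (Finset.notMem_empty e),
   fun e he => absurd he (Finset.notMem_empty e)⟩

lemma matchingSet_bdd :
    BddAbove {n | ∃ M : Finset (Sym2 V), G.IsMatchingSet M ∧ M.card = n} :=
  ⟨Fintype.card (Sym2 V), fun _ ⟨M, _, h⟩ => h ▸ Finset.card_le_univ M⟩

lemma inducedSet_bdd :
    BddAbove {n | ∃ M : Finset (Sym2 V), G.IsInducedMatchingSet M ∧ M.card = n} :=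
  ⟨Fintype.card (Sym2 V), fun _ ⟨M, _, h⟩ => h ▸ Finset.card_le_univ M⟩

lemma matchingSet_nonempty :
    {n | ∃ M : Finset (Sym2 V), G.IsMatchingSet M ∧ M.card = n}.Nonempty :=
  ⟨0, ∅, empty_isMatchingSet, Finset.card_empty⟩

lemma inducedSet_nonempty :
    {n | ∃ M : Finset (Sym2 V), G.IsInducedMatchingSet M ∧ M.card = n}.Nonempty :=
  ⟨0, ⟨∅, ⟨empty_isMatchingSet, fun e he => absurd he (Finset.notMem_empty e)⟩,
    Finset.card_empty⟩⟩

lemma card_le_matchingNumber {N : Finset (Sym2 V)} (hN : G.IsMatchingSet N) :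
    N.card ≤ G.matchingNumber :=
  le_csSup matchingSet_bdd ⟨N, hN, rfl⟩

lemma card_le_inducedMatchingNumber {N : Finset (Sym2 V)} (hN : G.IsInducedMatchingSet N) :
    N.card ≤ G.inducedMatchingNumber :=
  le_csSup inducedSet_bdd ⟨N, hN, rfl⟩

lemma inducedMatchingNumber_le_matchingNumber :
    G.inducedMatchingNumber ≤ G.matchingNumber :=
  csSup_le_csSup matchingSet_bdd inducedSet_nonempty
    (fun _ ⟨M, hM, h⟩ => ⟨M, hM.1, h⟩)

/-- There is an induced matching whose cardinality is the induced matching number. -/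
lemma exists_max_induced :
    ∃ M : Finset (Sym2 V), G.IsInducedMatchingSet M ∧ M.card = G.inducedMatchingNumber :=
  Nat.sSup_mem inducedSet_nonempty inducedSet_bdd

lemma matchingNumber_le_of_bound {M₀ : Finset (Sym2 V)}
    (h : ∀ N : Finset (Sym2 V), G.IsMatchingSet N → N.card ≤ M₀.card) :
    G.matchingNumber ≤ M₀.card :=
  csSup_le matchingSet_nonempty (fun _ ⟨N, hN, hc⟩ => hc ▸ h N hN)

/-- If there is an induced matching dominating every matching, the two numbers agree. -/
lemma eq_numbers_of_bound {M₀ : Finset (Sym2 V)} (h₀ : G.IsInducedMatchingSet M₀)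
    (h : ∀ N : Finset (Sym2 V), G.IsMatchingSet N → N.card ≤ M₀.card) :
    G.matchingNumber = G.inducedMatchingNumber :=
  le_antisymm ((matchingNumber_le_of_bound h).trans (card_le_inducedMatchingNumber h₀))
    inducedMatchingNumber_le_matchingNumber

end Aux

end SimpleGraph

/-- **Cameron–Walker classification.**  A finite connected simple graph with at least one
edge satisfies `ν(G) = ν₀(G)` if and only if it is a star, a star triangle, or a connected
bipartite graph with bipartition `(X, Y)` in which every vertex of `X` is incident to a
leaf edge, with possibly some pendant triangles attached to vertices of `Y`. -/
theorem cameron_walker_classification {V : Type*} [Fintype V] (G : SimpleGraph V)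
    (hconn : G.Connected) (hne : G.edgeSet.Nonempty) :
    G.matchingNumber = G.inducedMatchingNumber ↔
      (G.IsStarGraph ∨ G.IsStarTriangleGraph ∨ G.IsCWBipartiteWithPendantTriangles) := by
  classical
  constructor
  · intro heq
    obtain ⟨M, hM, hcard⟩ := SimpleGraph.exists_max_induced (G := G)
    have hmax : ∀ N : Finset (Sym2 V), G.IsMatchingSet N → N.card ≤ M.card := by
      intro N hN
      calc N.card ≤ G.matchingNumber := SimpleGraph.card_le_matchingNumber hN
        _ = G.inducedMatchingNumber := heq
        _ = M.card := hcard.symm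
    by_cases hP : ∃ e ∈ M, ¬ G.isTe M e
    · exact Or.inr (Or.inr (SimpleGraph.fwd_CW hM hmax hconn hP))
    · push_neg at hP
      have hMne : M.Nonempty := by
        obtain ⟨e₀, he₀⟩ := hne
        have h1 : G.IsMatchingSet {e₀} := by
          constructor
          · intro e he
            rw [Finset.mem_singleton] at he
            rwa [he]
          · intro e he f hf hef
            rw [Finset.mem_singleton] at he hf
            exact absurd (he.trans hf.symm) hef
        have h2 := hmax _ h1
        rw [Finset.card_singleton] at h2
        exact Finset.card_pos.mp (by omega)
      exact Or.inr (Or.inl (SimpleGraph.fwd_starTriangle hM hmax hconn hMne hP))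
  · rintro (hstar | hst | hcw)
    · obtain ⟨c, ⟨v, hvc⟩, hadj⟩ := hstar
      have hAdj : G.Adj c v := (hadj c v).mpr (Or.inl ⟨rfl, hvc⟩)
      apply SimpleGraph.eq_numbers_of_bound (M₀ := ({s(c,v)} : Finset (Sym2 V)))
      · refine ⟨⟨?_, ?_⟩, ?_⟩
        · intro e he
          rw [Finset.mem_singleton] at he
          rw [he]
          exact G.mem_edgeSet.mpr hAdj
        · intro e he f hf hef
          rw [Finset.mem_singleton] at he hf
          exact absurd (he.trans hf.symm) hef
        · intro e he f hf hef
          rw [Finset.mem_singleton] at he hf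
          exact absurd (he.trans hf.symm) hef
      · intro N hN
        rw [Finset.card_singleton]
        exact SimpleGraph.star_matching_card_le hadj hN
    · obtain ⟨c, p, ⟨v, hvc⟩, hp, hadj⟩ := hst
      exact SimpleGraph.eq_numbers_of_bound (SimpleGraph.stM_induced hp hadj)
        (fun N hN => SimpleGraph.stM_bound hp hadj hN)
    · obtain ⟨X, Y, Z, pair, att, hXY, hXZ, hYZ, hcover, hXne, hXind, hYind, hz, hleaf, _⟩ := hcw
      exact SimpleGraph.eq_numbers_of_bound
        (SimpleGraph.cwM_induced hXY hXZ hYZ hXind hYind hz hleaf)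
        (fun N hN => SimpleGraph.cwM_bound hXY hXZ hYZ hcover hXind hYind hz hleaf hN)
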